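/- The 8-dimensional algebra W(2)-tilde-tilde with basis e_1,...,e_8 and nonzero products e_1e_1=-e_1, e_1e_2=-3e_2, e_1e_3=e_3, e_1e_4=3e_4, e_1e_5=-e_5, e_1e_6=e_6, e_1e_7=e_7, e_1e_8=-e_8, e_2e_1=3e_2, e_3e_1=-2e_3, e_6e_1=2e_3, e_7e_1=2e_3 satisfies both standard degree-3 identities: Σ_{σ∈S_3} sgn(σ)(x_{σ(1)}x_{σ(2)})x_{σ(3)} = 0 and Σ_{σ∈S_3} sgn(σ) x_{σ(3)}(x_{σ(2)}x_{σ(1)}) = 0 for all x_1,x_2,x_3. -/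
import Mathlib


def tbl (F : Type*) [Field F] : Fin 8 → Fin 8 → Fin 8 → F :=
  ![![![-1, 0, 0, 0, 0, 0, 0, 0], ![0, -3, 0, 0, 0, 0, 0, 0], ![0, 0, 1, 0, 0, 0, 0, 0], ![0, 0, 0, 3, 0, 0, 0, 0], ![0, 0, 0, 0, -1, 0, 0, 0], ![0, 0, 0, 0, 0, 1, 0, 0], ![0, 0, 0, 0, 0, 0, 1, 0], ![0, 0, 0, 0, 0, 0, 0, -1]],
    ![![0, 3, 0, 0, 0, 0, 0, 0], ![0, 0, 0, 0, 0, 0, 0, 0], ![0, 0, 0, 0, 0, 0, 0, 0], ![0, 0, 0, 0, 0, 0, 0, 0], ![0, 0, 0, 0, 0, 0, 0, 0], ![0, 0, 0, 0, 0, 0, 0, 0], ![0, 0, 0, 0, 0, 0, 0, 0], ![0, 0, 0, 0, 0, 0, 0, 0]],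
    ![![0, 0, -2, 0, 0, 0, 0, 0], ![0, 0, 0, 0, 0, 0, 0, 0], ![0, 0, 0, 0, 0, 0, 0, 0], ![0, 0, 0, 0, 0, 0, 0, 0], ![0, 0, 0, 0, 0, 0, 0, 0], ![0, 0, 0, 0, 0, 0, 0, 0], ![0, 0, 0, 0, 0, 0, 0, 0], ![0, 0, 0, 0, 0, 0, 0, 0]],
    ![![0, 0, 0, 0, 0, 0, 0, 0], ![0, 0, 0, 0, 0, 0, 0, 0], ![0, 0, 0, 0, 0, 0, 0, 0], ![0, 0, 0, 0, 0, 0, 0, 0], ![0, 0, 0, 0, 0, 0, 0, 0], ![0, 0, 0, 0, 0, 0, 0, 0], ![0, 0, 0, 0, 0, 0, 0, 0], ![0, 0, 0, 0, 0, 0, 0, 0]],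
    ![![0, 0, 0, 0, 0, 0, 0, 0], ![0, 0, 0, 0, 0, 0, 0, 0], ![0, 0, 0, 0, 0, 0, 0, 0], ![0, 0, 0, 0, 0, 0, 0, 0], ![0, 0, 0, 0, 0, 0, 0, 0], ![0, 0, 0, 0, 0, 0, 0, 0], ![0, 0, 0, 0, 0, 0, 0, 0], ![0, 0, 0, 0, 0, 0, 0, 0]],
    ![![0, 0, 2, 0, 0, 0, 0, 0], ![0, 0, 0, 0, 0, 0, 0, 0], ![0, 0, 0, 0, 0, 0, 0, 0], ![0, 0, 0, 0, 0, 0, 0, 0], ![0, 0, 0, 0, 0, 0, 0, 0], ![0, 0, 0, 0, 0, 0, 0, 0], ![0, 0, 0, 0, 0, 0, 0, 0], ![0, 0, 0, 0, 0, 0, 0, 0]],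
    ![![0, 0, 2, 0, 0, 0, 0, 0], ![0, 0, 0, 0, 0, 0, 0, 0], ![0, 0, 0, 0, 0, 0, 0, 0], ![0, 0, 0, 0, 0, 0, 0, 0], ![0, 0, 0, 0, 0, 0, 0, 0], ![0, 0, 0, 0, 0, 0, 0, 0], ![0, 0, 0, 0, 0, 0, 0, 0], ![0, 0, 0, 0, 0, 0, 0, 0]],
    ![![0, 0, 0, 0, 0, 0, 0, 0], ![0, 0, 0, 0, 0, 0, 0, 0], ![0, 0, 0, 0, 0, 0, 0, 0], ![0, 0, 0, 0, 0, 0, 0, 0], ![0, 0, 0, 0, 0, 0, 0, 0], ![0, 0, 0, 0, 0, 0, 0, 0], ![0, 0, 0, 0, 0, 0, 0, 0], ![0, 0, 0, 0, 0, 0, 0, 0]]]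

def mul (F : Type*) [Field F] (x y : Fin 8 → F) : Fin 8 → F :=
  fun k => ∑ i, ∑ j, x i * y j * tbl F i j k


@[simp] lemma cv5 {α : Type*} (x : α) (u : Fin 7 → α) : Matrix.vecCons x u 5 = u 4 := rfl
@[simp] lemma cv6 {α : Type*} (x : α) (u : Fin 7 → α) : Matrix.vecCons x u 6 = u 5 := rfl
@[simp] lemma cv7 {α : Type*} (x : α) (u : Fin 7 → α) : Matrix.vecCons x u 7 = u 6 := rfl
@[simp] lemma cv5' {α : Type*} (x : α) (u : Fin 6 → α) : Matrix.vecCons x u 5 = u 4 := rfl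
@[simp] lemma cv6' {α : Type*} (x : α) (u : Fin 6 → α) : Matrix.vecCons x u 6 = u 5 := rfl
@[simp] lemma cv5'' {α : Type*} (x : α) (u : Fin 5 → α) : Matrix.vecCons x u 5 = u 4 := rfl

lemma sum_perm3 {M : Type*} [AddCommMonoid M] (f : Equiv.Perm (Fin 3) → M) :
    ∑ σ : Equiv.Perm (Fin 3), f σ =
      f 1 + f (Equiv.swap 0 1) + f (Equiv.swap 0 2) + f (Equiv.swap 1 2) +
      f (Equiv.swap 0 1 * Equiv.swap 1 2) + f (Equiv.swap 1 2 * Equiv.swap 0 1) := by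
  have hb : Function.Bijective
      (![1, Equiv.swap 0 1, Equiv.swap 0 2, Equiv.swap 1 2,
        Equiv.swap 0 1 * Equiv.swap 1 2, Equiv.swap 1 2 * Equiv.swap 0 1] :
        Fin 6 → Equiv.Perm (Fin 3)) := by decide
  rw [← Fintype.sum_bijective _ hb _ f (fun i => rfl), Fin.sum_univ_six]
  rfl

set_option maxHeartbeats 2000000 in
lemma mul_eq (F : Type*) [Field F] (x y : Fin 8 → F) :
    mul F x y = ![-(x 0 * y 0), -3 * x 0 * y 1 + 3 * x 1 * y 0,
      x 0 * y 2 - 2 * x 2 * y 0 + 2 * x 5 * y 0 + 2 * x 6 * y 0,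
      3 * x 0 * y 3, -(x 0 * y 4), x 0 * y 5, x 0 * y 6, -(x 0 * y 7)] := by
  funext k
  fin_cases k <;> simp [mul, tbl, Fin.sum_univ_eight, Matrix.vecHead, Matrix.vecTail] <;> ring

set_option maxHeartbeats 4000000 in
/-- `W(2)`-tilde-tilde satisfies both standard degree-3 identities `st³₁` and `st³₂`. -/
theorem W2tt_satisfies_st3 (F : Type*) [Field F] [CharZero F] (x : Fin 3 → (Fin 8 → F)) :
    (∑ σ : Equiv.Perm (Fin 3), (Equiv.Perm.sign σ : ℤ) •
        mul F (mul F (x (σ 0)) (x (σ 1))) (x (σ 2)) = 0) ∧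
    (∑ σ : Equiv.Perm (Fin 3), (Equiv.Perm.sign σ : ℤ) •
        mul F (x (σ 2)) (mul F (x (σ 1)) (x (σ 0))) = 0) := by
  have sgn : ∀ a b : Fin 3, a ≠ b → ((Equiv.Perm.sign (Equiv.swap a b) : ℤˣ) : ℤ) = -1 := by
    intro a b h; rw [Equiv.Perm.sign_swap h]; rfl
  constructor <;>
  · rw [sum_perm3]
    simp only [Equiv.Perm.sign_one, Equiv.Perm.sign_mul,
      sgn 0 1 (by decide), sgn 0 2 (by decide), sgn 1 2 (by decide),
      Units.val_one, Units.val_mul, Equiv.Perm.one_apply, Equiv.Perm.mul_apply,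
      show (Equiv.swap (0:Fin 3) 1) 0 = 1 from rfl, show (Equiv.swap (0:Fin 3) 1) 1 = 0 from rfl,
      show (Equiv.swap (0:Fin 3) 1) 2 = 2 from rfl,
      show (Equiv.swap (0:Fin 3) 2) 0 = 2 from rfl, show (Equiv.swap (0:Fin 3) 2) 1 = 1 from rfl,
      show (Equiv.swap (0:Fin 3) 2) 2 = 0 from rfl,
      show (Equiv.swap (1:Fin 3) 2) 0 = 0 from rfl, show (Equiv.swap (1:Fin 3) 2) 1 = 2 from rfl,
      show (Equiv.swap (1:Fin 3) 2) 2 = 1 from rfl,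
      mul_eq, neg_mul, one_mul, mul_one, neg_neg, one_smul, neg_smul]
    funext k
    fin_cases k <;>
      simp [Matrix.vecHead, Matrix.vecTail] <;> ring
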